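/- With Q, I, J as above (I = (z x_1,...,z x_n), J generated by monomials x_i y_{i,j}), one has I ∩ J = z·J, i.e., the intersection of I and J equals the product of the principal ideal (z) with J. -/

import Mathlib

/-- Variables of the polynomial ring `Q = k[z, x_1,…,x_n, y_{i,j}]`. -/
inductive TreeVar (n : ℕ) (a : Fin n → ℕ) : Type
  | z : TreeVar n a
  | x : Fin n → TreeVar n a
  | y : (i : Fin n) → Fin (a i) → TreeVar n a

open MvPolynomial

/-- Non-`z` variables. -/
inductive SVar (n : ℕ) (a : Fin n → ℕ) : Type
  | x : Fin n → SVar n a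
  | y : (i : Fin n) → Fin (a i) → SVar n a

def treeEquiv (n : ℕ) (a : Fin n → ℕ) : TreeVar n a ≃ Option (SVar n a) where
  toFun v := match v with
    | TreeVar.z => none
    | TreeVar.x i => some (SVar.x i)
    | TreeVar.y i j => some (SVar.y i j)
  invFun o := match o with
    | none => TreeVar.z
    | some (SVar.x i) => TreeVar.x i
    | some (SVar.y i j) => TreeVar.y i j
  left_inv v := by cases v <;> rfl
  right_inv o := by
    cases o with
    | none => rfl
    | some s => cases s <;> rfl

noncomputable def treeAlgEquiv (n : ℕ) (a : Fin n → ℕ) (k : Type*) [CommSemiring k] :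
    MvPolynomial (TreeVar n a) k ≃ₐ[k] Polynomial (MvPolynomial (SVar n a) k) :=
  (renameEquiv k (treeEquiv n a)).trans (optionEquivLeft k (SVar n a))

/-- with `I = (z x_1, …, z x_n)` and `J = (x_i y_{i,j})`,
one has `I ⊓ J = z·J`. -/
theorem stmt1 {k : Type*} [Field k] (n : ℕ) (hn : 0 < n) (a : Fin n → ℕ)
    (I J : Ideal (MvPolynomial (TreeVar n a) k))
    (hI : I = Ideal.span (Set.range fun i : Fin n =>
      X (TreeVar.z : TreeVar n a) * X (TreeVar.x i)))
    (hJ : J = Ideal.span {p | ∃ (i : Fin n) (j : Fin (a i)),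
      p = X (TreeVar.x i : TreeVar n a) * X (TreeVar.y i j)}) :
    I ⊓ J = Ideal.span {X (TreeVar.z : TreeVar n a)} * J := by
  set e := treeAlgEquiv n a k
  have he_z : e (X TreeVar.z) = Polynomial.X := by
    simp [e, treeAlgEquiv, treeEquiv, optionEquivLeft_X_none]
  have he_x : ∀ i, e (X (TreeVar.x i)) = Polynomial.C (X (SVar.x i)) := by
    intro i; simp [e, treeAlgEquiv, treeEquiv, optionEquivLeft_X_some]
  have he_y : ∀ i j, e (X (TreeVar.y i j)) = Polynomial.C (X (SVar.y i j)) := by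
    intro i j; simp [e, treeAlgEquiv, treeEquiv, optionEquivLeft_X_some]
  set J₀ : Ideal (MvPolynomial (SVar n a) k) := Ideal.span {p | ∃ (i : Fin n) (j : Fin (a i)),
      p = X (SVar.x i : SVar n a) * X (SVar.y i j)} with hJ₀
  have hmapJ : Ideal.map (e : MvPolynomial (TreeVar n a) k →+* _) J = Ideal.map Polynomial.C J₀ := by
    rw [hJ, hJ₀, Ideal.map_span, Ideal.map_span]
    congr 1
    ext p
    constructor
    · rintro ⟨q, ⟨i, j, rfl⟩, rfl⟩
      exact ⟨X (SVar.x i) * X (SVar.y i j), ⟨i, j, rfl⟩, by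
        simp [map_mul, he_x i, he_y i j]⟩
    · rintro ⟨q, ⟨i, j, rfl⟩, rfl⟩
      exact ⟨X (TreeVar.x i) * X (TreeVar.y i j), ⟨i, j, rfl⟩, by
        simp [map_mul, he_x i, he_y i j]⟩
  have hmem : ∀ q : MvPolynomial (TreeVar n a) k, q ∈ J ↔ e q ∈ Ideal.map Polynomial.C J₀ := by
    intro q
    rw [← hmapJ]
    constructor
    · intro hq; exact Ideal.mem_map_of_mem _ hq
    · intro hq
      have h2 := Ideal.mem_map_of_mem (e.symm : Polynomial (MvPolynomial (SVar n a) k) →+* MvPolynomial (TreeVar n a) k) hq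
      rw [Ideal.map_map] at h2
      have hcomp : ((e.symm : Polynomial (MvPolynomial (SVar n a) k) →+* MvPolynomial (TreeVar n a) k).comp
          (e : MvPolynomial (TreeVar n a) k →+* _)) = RingHom.id _ :=
        RingHom.ext fun r => e.symm_apply_apply r
      rw [hcomp, Ideal.map_id] at h2
      simpa using h2
  have key : ∀ q : MvPolynomial (TreeVar n a) k, X TreeVar.z * q ∈ J → q ∈ J := by
    intro q hq
    rw [hmem] at hq ⊢
    rw [map_mul, he_z, Ideal.mem_map_C_iff] at hq
    rw [Ideal.mem_map_C_iff]
    intro m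
    have := hq (m + 1)
    rwa [Polynomial.coeff_X_mul] at this
  have hzJ : ∀ s ∈ J, X (TreeVar.z : TreeVar n a) * s ∈ I := by
    intro s hs
    rw [hJ] at hs
    induction hs using Submodule.span_induction with
    | mem p hp =>
      obtain ⟨i, j, rfl⟩ := hp
      rw [hI]
      have h3 : (X (TreeVar.z : TreeVar n a) : MvPolynomial (TreeVar n a) k) *
            (X (TreeVar.x i) * X (TreeVar.y i j))
          = (X TreeVar.z * X (TreeVar.x i)) * X (TreeVar.y i j) := by ring
      rw [h3]
      exact Ideal.mul_mem_right _ _ (Ideal.subset_span ⟨i, rfl⟩)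
    | zero => simp
    | add p q _ _ hp hq => rw [mul_add]; exact Ideal.add_mem _ hp hq
    | smul c p _ hp =>
      rw [smul_eq_mul]
      have h4 : X (TreeVar.z : TreeVar n a) * (c * p) = c * (X TreeVar.z * p) := by ring
      rw [h4]
      exact Ideal.mul_mem_left _ _ hp
  apply le_antisymm
  · rintro p ⟨hpI, hpJ⟩
    have hIz : I ≤ Ideal.span {X (TreeVar.z : TreeVar n a)} := by
      rw [hI, Ideal.span_le]
      rintro _ ⟨i, rfl⟩
      exact Ideal.mem_span_singleton.2 ⟨X (TreeVar.x i), rfl⟩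
    obtain ⟨q, rfl⟩ := Ideal.mem_span_singleton.1 (hIz hpI)
    exact Ideal.mem_span_singleton_mul.2 ⟨q, key q hpJ, rfl⟩
  · refine le_inf ?_ Ideal.mul_le_right
    rw [Ideal.mul_le]
    rintro r hr s hs
    obtain ⟨t, rfl⟩ := Ideal.mem_span_singleton.1 hr
    have h5 : X (TreeVar.z : TreeVar n a) * t * s = t * (X TreeVar.z * s) := by ring
    rw [h5]
    exact Ideal.mul_mem_left _ _ (hzJ s hs)
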